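/- Let E be a group fitting in a short exact sequence 1 → Z^4 → E → Q → 1 where Q is a finite group of order 24, and suppose E contains an element t mapping to the unique order-2 element of Q, acting trivially by conjugation on Z^4, and such that t^2 = e_1 e_2 e_3 e_4 where (e_1, e_2, e_3, e_4) is a basis of Z^4. Then E contains no element of order 2. -/

import Mathlib

/-- Let `1 → ℤ⁴ → E → Q → 1` with `Q` finite of order 24, and let
`t ∈ E` map to the unique order-2 element of `Q`, act trivially by conjugation on
`ℤ⁴`, and satisfy `t² = e₁e₂e₃e₄` where `(e₁,e₂,e₃,e₄)` is a basis of `ℤ⁴`.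
Then `E` has no element of order 2. -/
theorem stmt_6 {E : Type*} [Group E] (A : Subgroup E) [A.Normal]
    [Finite (E ⧸ A)] (hQ : Nat.card (E ⧸ A) = 24)
    -- a basis of the free abelian normal subgroup A of rank 4
    (f : Multiplicative (Fin 4 → ℤ) →* E)
    (hf_inj : Function.Injective f) (hf_range : f.range = A)
    (e : Fin 4 → E) (he : ∀ i, e i = f (Multiplicative.ofAdd (Pi.single i 1)))
    (t : E)
    -- t maps to the unique element of order 2 in Q
    (ht_ord : orderOf (QuotientGroup.mk t : E ⧸ A) = 2)
    (ht_unique : ∀ q : E ⧸ A, orderOf q = 2 → q = QuotientGroup.mk t)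
    -- t acts trivially by conjugation on A
    (ht_conj : ∀ a ∈ A, t * a * t⁻¹ = a)
    -- t² = e₁e₂e₃e₄
    (ht_sq : t ^ 2 = e 0 * e 1 * e 2 * e 3) :
    ∀ g : E, orderOf g ≠ 2 := by
  intro g hg
  have hg2 : g ^ 2 = 1 := by
    have := pow_orderOf_eq_one g
    rwa [hg] at this
  have hgne : g ≠ 1 := by
    intro h; rw [h] at hg; simp at hg
  -- order of image divides 2
  have hdvd : orderOf (QuotientGroup.mk g : E ⧸ A) ∣ 2 := by
    have := orderOf_map_dvd (QuotientGroup.mk' A) g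
    rwa [hg] at this
  rcases (Nat.dvd_prime Nat.prime_two).mp hdvd with h | h
  · -- g ∈ A
    have hgA : g ∈ A := by
      have : (QuotientGroup.mk g : E ⧸ A) = 1 := orderOf_eq_one_iff.mp h
      rwa [QuotientGroup.eq_one_iff] at this
    rw [← hf_range] at hgA
    obtain ⟨v, hv⟩ := hgA
    have : f (v * v) = f 1 := by
      rw [map_mul, map_one, hv, ← sq, hg2]
    have hv0 : v = 1 := by
      have h2 := hf_inj this
      have : Multiplicative.toAdd v + Multiplicative.toAdd v = 0 := by
        have := congrArg Multiplicative.toAdd h2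
        simpa using this
      have : Multiplicative.toAdd v = 0 := by
        funext i
        have := congrFun this i
        simp at this ⊢
        omega
      simpa using congrArg Multiplicative.ofAdd this
    exact hgne (by rw [← hv, hv0, map_one])
  · -- image has order 2, so equals class of t
    have heq := ht_unique _ h
    have hmem : g⁻¹ * t ∈ A := (QuotientGroup.eq ).mp heq
    have haA : g * t⁻¹ ∈ A := by
      have h1 : (g⁻¹ * t)⁻¹ ∈ A := A.inv_mem hmem
      simp only [mul_inv_rev, inv_inv] at h1
      -- h1 : t⁻¹ * g ∈ A
      have := Subgroup.Normal.conj_mem ‹A.Normal› _ h1 g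
      simpa [mul_assoc] using this
    set a := g * t⁻¹ with ha
    have hg_eq : g = a * t := by rw [ha]; group
    have hta : t * a * t⁻¹ = a := ht_conj a haA
    have hsq : a * a * t ^ 2 = 1 := by
      have : g ^ 2 = a * (t * a * t⁻¹) * t ^ 2 := by
        rw [hg_eq, sq, sq]; group
      rw [hta] at this
      rw [← this, hg2]
    rw [← hf_range] at haA
    obtain ⟨v, hv⟩ := haA
    have key : f (v * v * (Multiplicative.ofAdd (Pi.single 0 1) *
        Multiplicative.ofAdd (Pi.single 1 1) * Multiplicative.ofAdd (Pi.single 2 1) *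
        Multiplicative.ofAdd (Pi.single 3 1))) = f 1 := by
      rw [map_one]
      simp only [map_mul]
      rw [hv, ← he 0, ← he 1, ← he 2, ← he 3]
      rw [← ht_sq]
      simpa [mul_assoc] using hsq
    have h2 := hf_inj key
    have hcontra := congrFun (congrArg Multiplicative.toAdd h2) 0
    simp [Pi.single_apply] at hcontra
    omega
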